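/- Let k ≥ 2 be an integer, let R > 0 be real, and let x < 0 be a real number with |x| ≥ R/sin(π/(2k)). Then for every complex number z with |z| ≤ R, the real part of (−1)^{k−1}/(x − z)^k is at most 0. Moreover, for z = 0 the real part of (−1)^{k−1}/x^k is strictly negative. -/

import Mathlib

set_option maxHeartbeats 1000000 in
/-- For `k ≥ 2`, `R > 0` and a negative real `x` with `|x| ≥ R·csc(π/(2k))`,
the real part of `(-1)^(k-1)/(x - z)^k` is nonpositive for every `z` with `|z| ≤ R`,
and strictly negative for `z = 0`. -/
theorem stmt10 (k : ℕ) (hk : 2 ≤ k) (R : ℝ) (hR : 0 < R) (x : ℝ) (hx : x < 0)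
    (hxR : R / Real.sin (Real.pi / (2 * k)) ≤ |x|) :
    (∀ z : ℂ, ‖z‖ ≤ R →
      (((-1 : ℂ) ^ (k - 1)) / ((x : ℂ) - z) ^ k).re ≤ 0) ∧
    (((-1 : ℂ) ^ (k - 1) / (x : ℂ) ^ k).re < 0) := by
  have hkR : (2:ℝ) ≤ (k:ℝ) := by exact_mod_cast hk
  set θ : ℝ := Real.pi / (2 * k) with hθdef
  have hπ := Real.pi_pos
  have hθpos : 0 < θ := by apply div_pos hπ; positivity
  have hθle : θ ≤ Real.pi / 4 := by
    rw [hθdef]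
    apply div_le_div_of_nonneg_left hπ.le (by norm_num) (by linarith)
  have hθlt : θ < Real.pi / 2 := lt_of_le_of_lt hθle (by linarith)
  have hsin : 0 < Real.sin θ := Real.sin_pos_of_pos_of_lt_pi hθpos (by linarith)
  have hcos : 0 < Real.cos θ := Real.cos_pos_of_mem_Ioo ⟨by linarith, hθlt⟩
  have habs : |x| = -x := abs_of_neg hx
  set a : ℝ := -x with hadef
  have haR : R ≤ a * Real.sin θ := by
    rw [div_le_iff₀ hsin] at hxR
    rw [habs] at hxR; linarith
  have hsin1 : Real.sin θ < 1 := by nlinarith [Real.sin_sq_add_cos_sq θ]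
  have ha0 : 0 < a := by nlinarith
  have haR' : R < a := by nlinarith
  have hkθ : (k:ℝ) * θ = Real.pi / 2 := by
    rw [hθdef]; field_simp
  -- rewrite `(x:ℂ)` as `-(a:ℂ)`
  have hxa : (x:ℂ) = -(a:ℂ) := by rw [hadef]; push_cast; ring
  -- sign of `(-1)^(k-1)` vs `(-1)^k`
  have hsign : ((-1:ℂ)) ^ k = -((-1:ℂ)) ^ (k-1) := by
    conv_lhs => rw [show k = (k-1) + 1 from by omega]
    rw [pow_succ]; ring
  -- key lemma : the real part of `(z+a)^k` is nonnegative
  have key : ∀ z : ℂ, ‖z‖ ≤ R → 0 ≤ ((z + (a:ℂ)) ^ k).re := by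
    intro z hz
    set ζ : ℂ := z + (a:ℂ) with hζdef
    have hzr : |z.re| ≤ R := (Complex.abs_re_le_norm z).trans hz
    have hzi : |z.im| ≤ R := (Complex.abs_im_le_norm z).trans hz
    have hζre : ζ.re = z.re + a := by simp [hζdef]
    have hζim : ζ.im = z.im := by simp [hζdef]
    have hre : 0 < ζ.re := by
      rw [hζre]; have := abs_le.mp hzr; linarith
    -- Cauchy-Schwarz : |z.im| * cos θ - z.re * sin θ ≤ |z|
    have hCS : |z.im| * Real.cos θ - z.re * Real.sin θ ≤ ‖z‖ := by
      nlinarith [Complex.sq_norm z, Complex.normSq_apply z, norm_nonneg z,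
        Real.sin_sq_add_cos_sq θ, sq_abs z.im, abs_nonneg z.im,
        sq_nonneg (|z.im| * Real.sin θ + z.re * Real.cos θ)]
    have him : |ζ.im| * Real.cos θ ≤ ζ.re * Real.sin θ := by
      rw [hζre, hζim]; nlinarith
    -- bound the argument
    have htan : |ζ.im / ζ.re| ≤ Real.tan θ := by
      rw [Real.tan_eq_sin_div_cos, abs_div, abs_of_pos hre, div_le_div_iff₀ hre hcos]
      linarith [him]
    have habsarg : |Complex.arg ζ| < Real.pi / 2 :=
      Complex.abs_arg_lt_pi_div_two_iff.mpr (Or.inl hre)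
    have harg_eq : Complex.arg ζ = Real.arctan (ζ.im / ζ.re) := by
      have h := Complex.tan_arg ζ
      rw [← h, Real.arctan_tan (abs_lt.mp habsarg).1 (abs_lt.mp habsarg).2]
    have harctan_abs : ∀ t : ℝ, |Real.arctan t| = Real.arctan |t| := by
      intro t
      rcases le_or_gt 0 t with h | h
      · rw [abs_of_nonneg h, abs_of_nonneg]
        rw [← Real.arctan_zero]
        exact Real.arctan_strictMono.monotone h
      · have h' : Real.arctan t < 0 := by
          rw [← Real.arctan_zero]
          exact Real.arctan_strictMono h
        rw [abs_of_neg h, Real.arctan_neg, abs_of_neg h']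
    have harg_le : |Complex.arg ζ| ≤ θ := by
      rw [harg_eq, harctan_abs _, ← Real.arctan_tan (by linarith : -(Real.pi/2) < θ) hθlt]
      exact Real.arctan_strictMono.monotone htan
    -- polar form
    have hζpow : ζ ^ k = (((‖ζ‖ : ℝ) : ℂ)) ^ k *
        Complex.exp ((k * Complex.arg ζ) * Complex.I) := by
      conv_lhs => rw [← Complex.norm_mul_exp_arg_mul_I ζ]
      rw [mul_pow, ← Complex.exp_nat_mul]
      ring_nf
    have hcosk : 0 ≤ Real.cos ((k:ℝ) * Complex.arg ζ) := by
      apply Real.cos_nonneg_of_mem_Icc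
      have h1 : |(k:ℝ) * Complex.arg ζ| ≤ (k:ℝ) * θ := by
        rw [abs_mul, abs_of_nonneg (by positivity : (0:ℝ) ≤ (k:ℝ))]
        exact mul_le_mul_of_nonneg_left harg_le (by positivity)
      rw [hkθ] at h1
      constructor <;> [exact (abs_le.mp h1).1; exact (abs_le.mp h1).2]
    have habsζ : (0:ℝ) ≤ ‖ζ‖ := norm_nonneg ζ
    rw [hζpow,
      show ((k:ℂ) * Complex.arg ζ) * Complex.I
          = (((k:ℝ) * Complex.arg ζ : ℝ) : ℂ) * Complex.I by push_cast; ring,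
      Complex.exp_mul_I,
      show (((‖ζ‖ : ℝ) : ℂ)) ^ k = ((‖ζ‖ ^ k : ℝ) : ℂ) by push_cast; ring,
      ← Complex.ofReal_cos, ← Complex.ofReal_sin]
    simp only [Complex.add_re, Complex.mul_re, Complex.mul_im, Complex.ofReal_re,
      Complex.ofReal_im, Complex.I_re, Complex.I_im]
    ring_nf
    nlinarith [pow_nonneg habsζ k, hcosk]
  constructor
  · intro z hz
    have hζ0 : (z - (x:ℂ)) ≠ 0 := by
      intro h
      have : ‖z‖ = ‖(x:ℂ)‖ := by
        rw [show z = (x:ℂ) by linear_combination h]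
      rw [Complex.norm_real, Real.norm_eq_abs, habs] at this
      rw [this] at hz; linarith
    have hrw : ((x:ℂ) - z) ^ k = (-1:ℂ)^k * (z + (a:ℂ)) ^ k := by
      rw [← neg_pow]; congr 1; rw [hxa]; ring
    rw [hrw, hsign]
    have hζk : (z + (a:ℂ)) ^ k ≠ 0 := by
      apply pow_ne_zero
      intro h
      rw [hxa] at hζ0
      apply hζ0; linear_combination h
    rw [show ((-1:ℂ)^(k-1)) / (-(-1:ℂ)^(k-1) * (z + (a:ℂ)) ^ k)
        = -(((z + (a:ℂ)) ^ k)⁻¹) by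
      field_simp]
    rw [Complex.neg_re, Complex.inv_re]
    have := key z hz
    have h2 : 0 ≤ Complex.normSq ((z + (a:ℂ)) ^ k) := Complex.normSq_nonneg _
    simp only [neg_nonpos]
    positivity
  · rw [hxa, show (-(a:ℂ))^k = (-1:ℂ)^k * (a:ℂ)^k from by rw [neg_pow], hsign]
    have hak : ((a:ℂ))^k ≠ 0 := pow_ne_zero _ (by exact_mod_cast ha0.ne')
    rw [show ((-1:ℂ)^(k-1)) / (-(-1:ℂ)^(k-1) * ((a:ℂ)) ^ k)
        = -((((a:ℂ)) ^ k)⁻¹) by field_simp]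
    have : ((a:ℂ))^k = ((a^k : ℝ) : ℂ) := by push_cast; ring
    rw [this, ← Complex.ofReal_inv, ← Complex.ofReal_neg, Complex.ofReal_re]
    simp only [neg_neg, Left.neg_neg_iff]
    positivity
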